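/- Let A ∈ ℝ^{N×N} with ‖e^{At}‖ ≤ M e^{−σt} for all t ≥ 0 (M ≥ 1, σ > 0), and let h₂, h₃ : [0,∞) → [h_m, h_M] be continuous with |h₂(t) − h₃(t)| ≤ δ for all t. Then for any continuously differentiable x : [−h_M, ∞) → ℝ^N solving ẋ(t) = A x(t) + f(t) on [0, ∞) with f continuous, one has for all t ≥ h_M: ‖x(t − h₂(t)) − x(t − h₃(t))‖ ≤ (e^{δ‖A‖} − 1)·sup_{τ∈[t−h_M, t]} ‖x(τ)‖ + δ M · sup_{τ∈[t−h_M, t]} ‖f(τ)‖. -/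

import Mathlib

open Real Set

theorem delay_mismatch_estimate
    (N : ℕ) (M σ δ h_m h_M : ℝ) (hM : 1 ≤ M) (hσ : 0 < σ) (hδ : 0 ≤ δ)
    (hm : 0 < h_m) (hmM : h_m < h_M)
    (A : EuclideanSpace ℝ (Fin N) →L[ℝ] EuclideanSpace ℝ (Fin N))
    (hA : ∀ t : ℝ, 0 ≤ t → ‖NormedSpace.exp (t • A)‖ ≤ M * Real.exp (-σ * t))
    (h₂ h₃ : ℝ → ℝ) (hh₂ : Continuous h₂) (hh₃ : Continuous h₃)
    (hh₂r : ∀ t, 0 ≤ t → h₂ t ∈ Icc h_m h_M) (hh₃r : ∀ t, 0 ≤ t → h₃ t ∈ Icc h_m h_M)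
    (hmis : ∀ t, 0 ≤ t → |h₂ t - h₃ t| ≤ δ)
    (f : ℝ → EuclideanSpace ℝ (Fin N)) (hf : Continuous f)
    (x : ℝ → EuclideanSpace ℝ (Fin N)) (hx : Continuous x)
    (hx_diff : ∀ t, 0 ≤ t → HasDerivAt x (A (x t) + f t) t) :
    ∀ t, h_M ≤ t →
      ‖x (t - h₂ t) - x (t - h₃ t)‖
        ≤ (Real.exp (δ * ‖A‖) - 1) * (⨆ τ : Icc (t - h_M) t, ‖x τ‖)
          + δ * M * ⨆ τ : Icc (t - h_M) t, ‖f τ‖ := by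
  intro t ht
  have h0t : (0:ℝ) ≤ t := le_trans (le_of_lt (lt_trans hm hmM)) ht
  set a := t - h₂ t with ha
  set b := t - h₃ t with hb
  have hIne : Nonempty (Icc (t - h_M) t) := ⟨⟨t, by constructor <;> linarith⟩⟩
  set Sx := (⨆ τ : Icc (t - h_M) t, ‖x τ‖) with hSx
  set Sf := (⨆ τ : Icc (t - h_M) t, ‖f τ‖) with hSf
  have hbddx : BddAbove (Set.range fun τ : Icc (t - h_M) t => ‖x τ‖) := by
    have h1 : (fun τ : Icc (t - h_M) t => ‖x ↑τ‖) = (fun s => ‖x s‖) ∘ Subtype.val := rfl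
    rw [h1, Set.range_comp, Subtype.range_coe]
    exact (isCompact_Icc (a := t - h_M) (b := t)).bddAbove_image hx.norm.continuousOn
  have hbddf : BddAbove (Set.range fun τ : Icc (t - h_M) t => ‖f τ‖) := by
    have h1 : (fun τ : Icc (t - h_M) t => ‖f ↑τ‖) = (fun s => ‖f s‖) ∘ Subtype.val := rfl
    rw [h1, Set.range_comp, Subtype.range_coe]
    exact (isCompact_Icc (a := t - h_M) (b := t)).bddAbove_image hf.norm.continuousOn
  have hxle : ∀ s ∈ Icc (t - h_M) t, ‖x s‖ ≤ Sx := fun s hs =>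
    le_ciSup hbddx (⟨s, hs⟩ : Icc (t - h_M) t)
  have hfle : ∀ s ∈ Icc (t - h_M) t, ‖f s‖ ≤ Sf := fun s hs =>
    le_ciSup hbddf (⟨s, hs⟩ : Icc (t - h_M) t)
  have hSx0 : 0 ≤ Sx := le_trans (norm_nonneg _) (hxle t ⟨by linarith, le_refl t⟩)
  have hSf0 : 0 ≤ Sf := le_trans (norm_nonneg _) (hfle t ⟨by linarith, le_refl t⟩)
  have hmem : ∀ s ∈ Icc (t - h_M) t, (0:ℝ) ≤ s := fun s hs => by
    have := hs.1; linarith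
  set C := ‖A‖ * Sx + Sf with hC
  have hC0 : 0 ≤ C := add_nonneg (mul_nonneg (norm_nonneg _) hSx0) hSf0
  have hmemA : a ∈ Icc (t - h_M) t :=
    ⟨by have := (hh₂r t h0t).2; simp only [ha]; linarith,
     by have := (hh₂r t h0t).1; simp only [ha]; linarith⟩
  have hmemB : b ∈ Icc (t - h_M) t :=
    ⟨by have := (hh₃r t h0t).2; simp only [hb]; linarith,
     by have := (hh₃r t h0t).1; simp only [hb]; linarith⟩
  have key : ‖x b - x a‖ ≤ C * ‖b - a‖ := by
    refine Convex.norm_image_sub_le_of_norm_hasDerivWithin_le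
      (f' := fun s => A (x s) + f s) ?_ ?_ (convex_Icc _ _) hmemA hmemB
    · intro s hs
      exact (hx_diff s (hmem s hs)).hasDerivWithinAt
    · intro s hs
      calc ‖A (x s) + f s‖ ≤ ‖A (x s)‖ + ‖f s‖ := norm_add_le _ _
        _ ≤ ‖A‖ * ‖x s‖ + ‖f s‖ := add_le_add (A.le_opNorm _) le_rfl
        _ ≤ ‖A‖ * Sx + Sf := add_le_add
            (mul_le_mul_of_nonneg_left (hxle s hs) (norm_nonneg _)) (hfle s hs)
  have hab : ‖b - a‖ ≤ δ := by
    have h1 : b - a = h₂ t - h₃ t := by simp only [ha, hb]; ring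
    rw [h1, Real.norm_eq_abs]
    exact hmis t h0t
  have hkey2 : ‖x a - x b‖ ≤ C * δ := by
    rw [norm_sub_rev]
    exact le_trans key (mul_le_mul_of_nonneg_left hab hC0)
  refine le_trans hkey2 ?_
  have hexp : δ * ‖A‖ + 1 ≤ Real.exp (δ * ‖A‖) := Real.add_one_le_exp _
  have hAn : (0:ℝ) ≤ ‖A‖ := norm_nonneg _
  nlinarith [mul_le_mul_of_nonneg_right hexp hSx0, mul_nonneg hδ hSf0,
    mul_nonneg (mul_nonneg hδ hSf0) (sub_nonneg.mpr hM)]
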